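/- arXiv:2102.10299 — 14 statements merged into one kernel-verified Lean document; each statement's English description precedes it below -/
import Mathlib

section
/- Let L be an ideal of a commutative ring R with L ⊄ J(R). If I and K are quasi J-ideals of R with IL = KL, then √I = √K. -/
def IsQuasiJIdeal {R : Type*} [CommRing R] (I : Ideal R) : Prop :=
  I ≠ ⊤ ∧ ∀ a b : R, a * b ∈ I → a ∉ Ideal.jacobson (⊥ : Ideal R) → b ∈ I.radical

lemma aux_le {R : Type*} [CommRing R] (L I K : Ideal R)
    (hL : ¬ L ≤ Ideal.jacobson (⊥ : Ideal R))
    (hI : IsQuasiJIdeal I) (h : K * L ≤ I * L) : K ≤ I.radical := by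
  obtain ⟨a, haL, haJ⟩ := SetLike.not_le_iff_exists.mp hL
  intro b hb
  have hba : a * b ∈ I := by
    have : b * a ∈ I * L := h (Ideal.mul_mem_mul hb haL)
    have := Ideal.mul_le_left.trans le_rfl this
    · rwa [mul_comm]
  exact hI.2 a b hba haJ

theorem stmt3 {R : Type*} [CommRing R] (L I K : Ideal R)
    (hL : ¬ L ≤ Ideal.jacobson (⊥ : Ideal R))
    (hI : IsQuasiJIdeal I) (hK : IsQuasiJIdeal K) (h : I * L = K * L) :
    I.radical = K.radical := by
  have h1 : K ≤ I.radical := aux_le L I K hL hI h.ge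
  have h2 : I ≤ K.radical := aux_le L K I hL hK h.le
  apply le_antisymm
  · calc I.radical ≤ K.radical.radical := Ideal.radical_mono h2
    _ = K.radical := K.radical_idem
  · calc K.radical ≤ I.radical.radical := Ideal.radical_mono h1
    _ = I.radical := I.radical_idem
end

section
/- A commutative ring R is local (quasi-local) if and only if every proper ideal of R is a quasi J-ideal. -/
theorem stmt5 {R : Type*} [CommRing R] [Nontrivial R] :
    IsLocalRing R ↔ ∀ I : Ideal R, I ≠ ⊤ → IsQuasiJIdeal I := by
  constructor
  · intro hL I hI
    refine ⟨hI, fun a b hab ha => ?_⟩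
    rw [IsLocalRing.jacobson_eq_maximalIdeal ⊥ bot_ne_top] at ha
    have hu : IsUnit a := by
      by_contra h
      exact ha (h)
    obtain ⟨u, rfl⟩ := hu
    have : b = (↑u⁻¹ : R) * (↑u * b) := by
      rw [← mul_assoc]; simp
    rw [this]
    exact Ideal.le_radical (I.mul_mem_left _ hab)
  · intro h
    -- every nonunit is in J(⊥)
    have hJ : ∀ a : R, a ∈ nonunits R → a ∈ Ideal.jacobson (⊥ : Ideal R) := by
      intro a ha
      by_contra hna
      have hI : Ideal.span {a} ≠ ⊤ := by
        rw [Ne, Ideal.span_singleton_eq_top]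
        exact ha
      obtain ⟨-, h2⟩ := h _ hI
      have := h2 a 1 (by simpa using Ideal.mem_span_singleton_self a) hna
      rw [Ideal.radical_eq_sInf] at this
      obtain ⟨M, hM, hMmax⟩ := Ideal.exists_le_maximal _ hI
      have : (1 : R) ∈ M := by
        have := sInf_le (show M ∈ {J | Ideal.span {a} ≤ J ∧ J.IsPrime} from
          ⟨hMmax, hM.isPrime⟩) this
        exact this
      exact hM.ne_top (Ideal.eq_top_of_isUnit_mem _ this isUnit_one)
    have hJtop : Ideal.jacobson (⊥ : Ideal R) ≠ ⊤ := by
      obtain ⟨M, hM⟩ := Ideal.exists_maximal R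
      intro ht
      have : Ideal.jacobson (⊥ : Ideal R) ≤ M :=
        sInf_le ⟨bot_le, hM⟩
      rw [ht] at this
      exact hM.ne_top (top_le_iff.mp this)
    apply IsLocalRing.of_nonunits_add
    intro a b ha hb
    intro hu
    exact hJtop (Ideal.eq_top_of_isUnit_mem _ ((Ideal.jacobson ⊥).add_mem (hJ a ha) (hJ b hb)) hu)
end

section
/- A commutative ring R is local (quasi-local) if and only if every maximal ideal of R is a quasi J-ideal. -/
theorem stmt6 {R : Type*} [CommRing R] [Nontrivial R] :
    IsLocalRing R ↔ ∀ M : Ideal R, M.IsMaximal → IsQuasiJIdeal M := by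
  constructor
  · intro hL M hM
    refine ⟨hM.ne_top, fun a b hab ha ↦ ?_⟩
    rw [IsLocalRing.jacobson_eq_maximalIdeal ⊥ bot_ne_top,
      ← IsLocalRing.eq_maximalIdeal hM] at ha
    rcases hM.isPrime.mem_or_mem hab with h | h
    · exact absurd h ha
    · exact Ideal.le_radical h
  · intro h
    obtain ⟨M, hM⟩ := Ideal.exists_maximal R
    refine IsLocalRing.of_unique_max_ideal ⟨M, hM, fun N hN ↦ ?_⟩
    by_contra hne
    have hNM : ¬ N ≤ M := fun hle ↦ hne (hN.eq_of_le hM.ne_top hle)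
    obtain ⟨a, haN, haM⟩ := SetLike.not_le_iff_exists.mp hNM
    have haJ : a ∉ Ideal.jacobson (⊥ : Ideal R) := fun hj ↦
      haM (Ideal.mem_sInf.mp hj ⟨bot_le, hM⟩)
    have := (h N hN).2 a 1 (by simpa using haN) haJ
    rw [hN.isPrime.radical] at this
    exact hN.ne_top (N.eq_top_of_isUnit_mem this isUnit_one)
end

section
/- If R is a commutative ring with J(R) = 0 that is not an integral domain, then R has no quasi J-ideals. -/
theorem stmt8 {R : Type*} [CommRing R]
    (hJ : Ideal.jacobson (⊥ : Ideal R) = ⊥) (hnd : ¬ IsDomain R) :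
    ∀ I : Ideal R, ¬ IsQuasiJIdeal I := by
  rintro I ⟨hne, hq⟩
  -- R is nontrivial, else I = ⊤
  have hnt : Nontrivial R := by
    by_contra h
    have : Subsingleton R := not_nontrivial_iff_subsingleton.mp h
    exact hne (Subsingleton.elim _ _)
  -- I ≤ ⊥
  have hIbot : I = ⊥ := by
    apply le_antisymm _ bot_le
    intro x hx
    by_contra hx0
    have hxJ : x ∉ Ideal.jacobson (⊥ : Ideal R) := by rw [hJ]; exact hx0
    have h1 : (1 : R) ∈ I.radical := hq x 1 (by simpa using hx) hxJ
    obtain ⟨n, hn⟩ := h1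
    simp only [one_pow] at hn
    exact hne ((Ideal.eq_top_iff_one I).mpr hn)
  have hrad : (⊥ : Ideal R).radical ≤ ⊥ := le_trans Ideal.radical_le_jacobson hJ.le
  have : NoZeroDivisors R := by
    constructor
    intro a b hab
    by_cases ha : a = 0
    · exact Or.inl ha
    · right
      have hJa : a ∉ Ideal.jacobson (⊥ : Ideal R) := by rw [hJ]; exact ha
      have hb := hq a b (by rw [hIbot]; exact hab) hJa
      rw [hIbot] at hb
      exact hrad hb
  exact hnd (NoZeroDivisors.to_isDomain R)
end

section
/- Let R be a semiprimitive commutative ring (J(R)=0). Then R is an integral domain if and only if the only quasi J-ideal of R is the zero ideal. -/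
theorem stmt9 {R : Type*} [CommRing R] [Nontrivial R]
    (hJ : Ideal.jacobson (⊥ : Ideal R) = ⊥) :
    IsDomain R ↔ (∀ I : Ideal R, IsQuasiJIdeal I ↔ I = ⊥) := by
  have hrad : Ideal.radical (⊥ : Ideal R) = ⊥ :=
    le_antisymm (Ideal.radical_le_jacobson.trans hJ.le) bot_le
  constructor
  · intro hD I
    constructor
    · rintro ⟨hI, h⟩
      ext x
      simp only [Ideal.mem_bot]
      constructor
      · intro hx
        by_contra hx0
        have h1 : (1 : R) ∈ I.radical :=
          h x 1 (by simpa using hx) (by rw [hJ]; simpa using hx0)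
        exact hI (Ideal.radical_eq_top.mp ((Ideal.eq_top_iff_one _).mpr h1))
      · rintro rfl; exact I.zero_mem
    · rintro rfl
      refine ⟨bot_ne_top, fun a b hab ha => ?_⟩
      rw [hJ] at ha
      simp only [Ideal.mem_bot] at ha hab
      rcases mul_eq_zero.mp hab with h | h
      · exact absurd h ha
      · exact Ideal.le_radical (by simpa using h)
  · intro h
    obtain ⟨-, hq⟩ := (h ⊥).mpr rfl
    have : NoZeroDivisors R := ⟨fun {a b} hab => by
      by_cases ha : a = 0
      · exact Or.inl ha
      · refine Or.inr ?_
        have hb := hq a b (by simpa using hab) (by rw [hJ]; simpa using ha)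
        rw [hrad] at hb
        simpa using hb⟩
    exact NoZeroDivisors.to_isDomain R
end

section
/- If I is a quasi J-ideal of a commutative ring R and S is a subset of R with S ⊄ J(R), then √(I : S) = (√I : S). -/
def setColon {R : Type*} [CommRing R] (I : Ideal R) (S : Set R) : Ideal R where
  carrier := {r : R | ∀ s ∈ S, r * s ∈ I}
  zero_mem' := by intro s hs; simp
  add_mem' := by
    intro a b ha hb s hs
    have := I.add_mem (ha s hs) (hb s hs)
    simpa [add_mul] using this
  smul_mem' := by
    intro c a ha s hs
    have := I.mul_mem_left c (ha s hs)
    simpa [mul_assoc] using this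

theorem stmt10 {R : Type*} [CommRing R] (I : Ideal R) (S : Set R)
    (hS : ¬ S ⊆ (Ideal.jacobson (⊥ : Ideal R) : Set R))
    (hI : IsQuasiJIdeal I) :
    (setColon I S).radical = setColon I.radical S := by
  apply le_antisymm
  · rintro r ⟨n, hn⟩ s hs
    refine ⟨n + 1, ?_⟩
    have h := hn s hs
    have heq : (r * s) ^ (n + 1) = (r ^ n * s) * (r * s ^ n) := by ring
    rw [heq]
    exact I.mul_mem_right _ h
  · intro r hr
    obtain ⟨s0, hs0S, hs0J⟩ := Set.not_subset.mp hS
    obtain ⟨k, hk⟩ := hr s0 hs0S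
    have hsk : s0 ^ k ∉ Ideal.jacobson (⊥ : Ideal R) := by
      intro h
      apply hs0J
      show s0 ∈ Ideal.jacobson (⊥ : Ideal R)
      rw [Ideal.jacobson, Ideal.mem_sInf] at h ⊢
      intro J hJ
      exact hJ.2.isPrime.mem_of_pow_mem k (h hJ)
    have h2 : s0 ^ k * r ^ k ∈ I := by
      have : s0 ^ k * r ^ k = (r * s0) ^ k := by ring
      rw [this]; exact hk
    obtain ⟨m, hm⟩ := hI.2 _ _ h2 hsk
    exact ⟨k * m, fun s hs => by rw [pow_mul]; exact I.mul_mem_right s hm⟩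
end

section
/- If I is a quasi J-ideal of a commutative ring R and S is a subset of R with S ⊄ J(R), then (I : S) is a quasi J-ideal of R. -/
lemma jac_radical {R : Type*} [CommRing R] {a : R} {n : ℕ}
    (h : a ^ n ∈ Ideal.jacobson (⊥ : Ideal R)) : a ∈ Ideal.jacobson (⊥ : Ideal R) := by
  rw [Ideal.jacobson, Ideal.mem_sInf] at h ⊢
  intro J hJ
  exact hJ.2.isPrime.mem_of_pow_mem n (h hJ)

theorem stmt11 {R : Type*} [CommRing R] (I : Ideal R) (S : Set R)
    (hS : ¬ S ⊆ (Ideal.jacobson (⊥ : Ideal R) : Set R))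
    (hI : IsQuasiJIdeal I) :
    IsQuasiJIdeal (setColon I S) := by
  obtain ⟨s0, hs0S, hs0J⟩ := Set.not_subset.mp hS
  obtain ⟨hItop, hq⟩ := hI
  constructor
  · intro htop
    have h1 : (1 : R) ∈ setColon I S := htop ▸ Submodule.mem_top
    have hs0 : s0 * 1 ∈ I := by simpa [mul_comm] using h1 s0 hs0S
    have : (1 : R) ∈ I.radical := hq s0 1 hs0 hs0J
    obtain ⟨n, hn⟩ := this
    exact hItop (Ideal.eq_top_iff_one I |>.mpr (by simpa using hn))
  · intro a b hab haJ
    have h1 : s0 * (a * b) ∈ I := by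
      have := hab s0 hs0S
      ring_nf
      simpa [mul_comm, mul_assoc, mul_left_comm] using this
    have hab_rad : a * b ∈ I.radical := hq s0 (a * b) h1 hs0J
    obtain ⟨n, hn⟩ := hab_rad
    have hn' : a ^ n * b ^ n ∈ I := by rwa [mul_pow] at hn
    have hanJ : a ^ n ∉ Ideal.jacobson (⊥ : Ideal R) := fun h => haJ (jac_radical h)
    have hbn : b ^ n ∈ I.radical := hq (a ^ n) (b ^ n) hn' hanJ
    obtain ⟨m, hm⟩ := hbn
    refine ⟨n * m, ?_⟩
    intro s hs
    have : b ^ (n * m) ∈ I := by rwa [pow_mul]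
    exact I.mul_mem_right s this
end

section
/- If I is a quasi J-ideal of a commutative ring R that is maximal among quasi J-ideals (with respect to inclusion), then I is a J-ideal of R. -/
def IsJIdeal {R : Type*} [CommRing R] (I : Ideal R) : Prop :=
  I ≠ ⊤ ∧ ∀ a b : R, a * b ∈ I → a ∉ Ideal.jacobson (⊥ : Ideal R) → b ∈ I

lemma jac_pow_mem {R : Type*} [CommRing R] {a : R} {n : ℕ} (hn : n ≠ 0)
    (h : a ^ n ∈ Ideal.jacobson (⊥ : Ideal R)) : a ∈ Ideal.jacobson (⊥ : Ideal R) := by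
  rw [Ideal.jacobson, Ideal.mem_sInf] at h ⊢
  intro M hM
  haveI := hM.2
  exact hM.2.isPrime.mem_of_pow_mem n (h hM)

theorem stmt12 {R : Type*} [CommRing R] (I : Ideal R) (hI : IsQuasiJIdeal I)
    (hmax : ∀ K : Ideal R, IsQuasiJIdeal K → I ≤ K → K = I) :
    IsJIdeal I := by
  obtain ⟨hne, hq⟩ := hI
  have hradq : IsQuasiJIdeal I.radical := by
    refine ⟨fun h => hne (Ideal.radical_eq_top.mp h), ?_⟩
    intro a b hab haj
    obtain ⟨n, hn⟩ := hab
    rcases Nat.eq_zero_or_pos n with rfl | hnpos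
    · simp at hn
      exact absurd (Ideal.eq_top_iff_one I |>.mpr hn) hne
    rw [mul_pow] at hn
    have hanj : a ^ n ∉ Ideal.jacobson (⊥ : Ideal R) :=
      fun h => haj (jac_pow_mem hnpos.ne' h)
    have hbn : b ^ n ∈ I.radical := hq _ _ hn hanj
    exact ⟨n, hbn⟩
  have heq : I.radical = I := hmax _ hradq Ideal.le_radical
  exact ⟨hne, fun a b hab haj => heq ▸ hq a b hab haj⟩
end

section
/- For a commutative ring R, the following are equivalent: (1) J(R) is a J-ideal; (2) J(R) is a quasi J-ideal; (3) J(R) is a prime ideal. -/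
lemma rad_jac_le {R : Type*} [CommRing R] :
    (Ideal.jacobson (⊥ : Ideal R)).radical ≤ Ideal.jacobson (⊥ : Ideal R) := by
  intro x hx
  obtain ⟨n, hn⟩ := hx
  rw [Ideal.jacobson, Ideal.mem_sInf] at hn ⊢
  intro m hm
  exact hm.2.isPrime.mem_of_pow_mem n (hn hm)

theorem stmt13 {R : Type*} [CommRing R]
    (h : Ideal.jacobson (⊥ : Ideal R) ≠ ⊤) :
    (IsJIdeal (Ideal.jacobson (⊥ : Ideal R)) ↔
      IsQuasiJIdeal (Ideal.jacobson (⊥ : Ideal R))) ∧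
    (IsQuasiJIdeal (Ideal.jacobson (⊥ : Ideal R)) ↔
      (Ideal.jacobson (⊥ : Ideal R)).IsPrime) := by
  constructor
  · constructor
    · rintro ⟨hne, hJ⟩
      exact ⟨hne, fun a b hab ha => Ideal.le_radical (hJ a b hab ha)⟩
    · rintro ⟨hne, hJ⟩
      exact ⟨hne, fun a b hab ha => rad_jac_le (hJ a b hab ha)⟩
  · constructor
    · rintro ⟨hne, hJ⟩
      refine ⟨hne, fun {a b} hab => ?_⟩
      by_cases ha : a ∈ Ideal.jacobson (⊥ : Ideal R)
      · exact Or.inl ha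
      · exact Or.inr (rad_jac_le (hJ a b hab ha))
    · intro hp
      exact ⟨h, fun a b hab ha =>
        Ideal.le_radical ((hp.mem_or_mem hab).resolve_left ha)⟩
end

section
/- If I is a quasi J-ideal of a commutative ring R, then I is superfluous, i.e., whenever K is an ideal with I + K = R, then K = R. -/
theorem stmt14 {R : Type*} [CommRing R] (I : Ideal R) (hI : IsQuasiJIdeal I) :
    ∀ K : Ideal R, I ⊔ K = ⊤ → K = ⊤ := by
  obtain ⟨hne, hq⟩ := hI
  -- First: I ≤ jacobson ⊥
  have hIJ : I ≤ Ideal.jacobson (⊥ : Ideal R) := by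
    intro a ha
    by_contra haJ
    have h1 : (1 : R) ∈ I.radical := hq a 1 (by simpa using ha) haJ
    exact hne (Ideal.radical_eq_top.mp (Ideal.eq_top_iff_one _ |>.mpr h1))
  intro K hK
  by_contra hKt
  obtain ⟨m, hm, hKm⟩ := Ideal.exists_le_maximal K hKt
  have hJm : Ideal.jacobson (⊥ : Ideal R) ≤ m :=
    sInf_le ⟨bot_le, hm⟩
  have : I ⊔ K ≤ m := sup_le (hIJ.trans hJm) hKm
  rw [hK] at this
  exact hm.ne_top (top_le_iff.mp this)
end

section
/- If I₁, ..., I_k are quasi J-ideals of a commutative ring R, then their intersection ⋂ᵢ Iᵢ is a quasi J-ideal of R. -/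
theorem stmt15 {R : Type*} [CommRing R] (k : ℕ) (hk : 0 < k)
    (I : Fin k → Ideal R) (hI : ∀ i, IsQuasiJIdeal (I i)) :
    IsQuasiJIdeal (⨅ i, I i) := by
  constructor
  · intro h
    have i0 : Fin k := ⟨0, hk⟩
    exact (hI i0).1 (top_le_iff.mp (h ▸ iInf_le I i0))
  · intro a b hab ha
    have hb : ∀ i, b ∈ (I i).radical := fun i =>
      (hI i).2 a b ((Ideal.mem_iInf.mp hab i)) ha
    choose n hn using hb
    refine ⟨Finset.univ.sup n + 1, Ideal.mem_iInf.mpr fun i => ?_⟩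
    have : b ^ (Finset.univ.sup n + 1) = b ^ n i * b ^ (Finset.univ.sup n + 1 - n i) := by
      rw [← pow_add]
      congr 1
      have := Finset.le_sup (f := n) (Finset.mem_univ i)
      omega
    rw [this]
    exact Ideal.mul_mem_right _ _ (hn i)
end

section
/- If I₁, ..., I_k are quasi J-ideals of a commutative ring R, then the product I₁ I₂ ⋯ I_k is a quasi J-ideal of R. -/
theorem stmt16 {R : Type*} [CommRing R] (k : ℕ) (hk : 0 < k)
    (I : Fin k → Ideal R) (hI : ∀ i, IsQuasiJIdeal (I i)) :
    IsQuasiJIdeal (∏ i, I i) := by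
  have hle : ∀ j, (∏ i, I i) ≤ I j := fun j =>
    le_trans Ideal.prod_le_inf (Finset.inf_le (Finset.mem_univ j))
  constructor
  · intro h
    exact (hI ⟨0, hk⟩).1 (top_le_iff.mp (h ▸ hle ⟨0, hk⟩))
  · intro a b hab ha
    have hbi : ∀ i, b ∈ (I i).radical := fun i => (hI i).2 a b (hle i hab) ha
    choose n hn using fun i => hbi i
    refine ⟨∑ i, n i, ?_⟩
    rw [← Finset.prod_pow_eq_pow_sum]
    exact Ideal.prod_mem_prod fun i _ => hn i
end

section
/- If R = R₁ × R₂ is a product of two nonzero commutative rings, then R has no quasi J-ideals. -/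
theorem stmt17 {R₁ R₂ : Type*} [CommRing R₁] [CommRing R₂]
    [Nontrivial R₁] [Nontrivial R₂] :
    ∀ I : Ideal (R₁ × R₂), ¬ IsQuasiJIdeal I := by
  intro I ⟨hI, h⟩
  set e : R₁ × R₂ := (1, 0)
  set f : R₁ × R₂ := (0, 1)
  have hef : e * f = 0 := by simp [e, f]
  have he : e ∉ Ideal.jacobson (⊥ : Ideal (R₁ × R₂)) := by
    rw [Ideal.mem_jacobson_bot]
    intro hu
    have := hu (-1, 0)
    have h2 : e * (-1, 0) + 1 = ((0 : R₁), (1 : R₂)) := by simp [e, Prod.ext_iff]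
    rw [h2] at this
    have := this.map (RingHom.fst R₁ R₂)
    simp at this
  have hf : f ∉ Ideal.jacobson (⊥ : Ideal (R₁ × R₂)) := by
    rw [Ideal.mem_jacobson_bot]
    intro hu
    have := hu (0, -1)
    have h2 : f * (0, -1) + 1 = ((1 : R₁), (0 : R₂)) := by simp [f, Prod.ext_iff]
    rw [h2] at this
    have := this.map (RingHom.snd R₁ R₂)
    simp at this
  have idem : ∀ (x : R₁ × R₂), x * x = x → x ∈ I.radical → x ∈ I := by
    intro x hx hxr
    obtain ⟨n, hn⟩ := hxr
    have hpow : ∀ m, x ^ (m + 1) = x := by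
      intro m
      induction m with
      | zero => simp
      | succ k ih => rw [pow_succ, ih, hx]
    cases n with
    | zero =>
      rw [pow_zero] at hn
      exact absurd (Ideal.eq_top_iff_one I |>.mpr hn) hI
    | succ k => rw [hpow k] at hn; exact hn
  have hfI : f ∈ I := idem f (by simp [f]) (h e f (by rw [hef]; exact I.zero_mem) he)
  have heI : e ∈ I := idem e (by simp [e]) (h f e (by rw [mul_comm, hef]; exact I.zero_mem) hf)
  have : (1 : R₁ × R₂) ∈ I := by
    have := I.add_mem heI hfI
    have h1 : e + f = 1 := by simp [e, f, Prod.ext_iff]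
    rwa [h1] at this
  exact hI (Ideal.eq_top_iff_one I |>.mpr this)
end

section
/- Let I be a proper ideal of a commutative ring R. Then I is a quasi J-ideal of R if and only if I ⊆ J(R) and the quotient ring R/I is quasi presimplifiable. -/
def QuasiPresimplifiable (R : Type*) [CommRing R] : Prop :=
  ∀ a b : R, a = a * b → a ∈ nilradical R ∨ IsUnit b

theorem stmt19 {R : Type*} [CommRing R] (I : Ideal R) (hI : I ≠ ⊤) :
    IsQuasiJIdeal I ↔
      I ≤ Ideal.jacobson (⊥ : Ideal R) ∧ QuasiPresimplifiable (R ⧸ I) := by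
  constructor
  · rintro ⟨-, h⟩
    constructor
    · intro x hx
      by_contra hxJ
      have h1 : (1 : R) ∈ I.radical := h x 1 (by simpa using hx) hxJ
      have : I.radical = ⊤ := Ideal.eq_top_iff_one _ |>.2 h1
      exact hI (Ideal.radical_eq_top.mp this)
    · intro a b hab
      obtain ⟨x, rfl⟩ := Ideal.Quotient.mk_surjective a
      obtain ⟨y, rfl⟩ := Ideal.Quotient.mk_surjective b
      have hxy : x * (1 - y) ∈ I := by
        rw [← Ideal.Quotient.eq_zero_iff_mem]
        push_cast [map_mul, map_sub, map_one]
        rw [mul_sub, mul_one, sub_eq_zero]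
        exact hab
      by_cases hJ : (1 - y) ∈ Ideal.jacobson (⊥ : Ideal R)
      · right
        have : IsUnit y := by
          have := Ideal.mem_jacobson_bot.mp hJ (-1)
          simpa using this
        exact this.map (Ideal.Quotient.mk I)
      · left
        have hx : x ∈ I.radical := h (1 - y) x (by rwa [mul_comm]) hJ
        obtain ⟨n, hn⟩ := hx
        refine ⟨n, ?_⟩
        show Ideal.Quotient.mk I x ^ n ∈ (⊥ : Ideal (R ⧸ I))
        rw [Ideal.mem_bot, ← map_pow, Ideal.Quotient.eq_zero_iff_mem]
        exact hn
  · rintro ⟨hIJ, h⟩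
    refine ⟨hI, fun a b hab haJ => ?_⟩
    rw [Ideal.mem_jacobson_bot] at haJ
    push_neg at haJ
    obtain ⟨x, hx⟩ := haJ
    have key : (Ideal.Quotient.mk I b) = (Ideal.Quotient.mk I b) * (Ideal.Quotient.mk I (a * x + 1)) := by
      rw [← map_mul, Ideal.Quotient.eq, ]
      have : b - b * (a * x + 1) = -((a * b) * x) := by ring
      rw [this]
      exact neg_mem (I.mul_mem_right x hab)
    rcases h _ _ key with hnil | hunit
    · obtain ⟨n, hn⟩ := hnil
      replace hn : Ideal.Quotient.mk I b ^ n ∈ (⊥ : Ideal (R ⧸ I)) := hn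
      rw [Ideal.mem_bot, ← map_pow, Ideal.Quotient.eq_zero_iff_mem] at hn
      exact ⟨n, hn⟩
    · exfalso
      obtain ⟨u, hu⟩ := hunit
      obtain ⟨s, hs⟩ := Ideal.Quotient.mk_surjective (↑u⁻¹ : R ⧸ I)
      have hts : (a * x + 1) * s - 1 ∈ I := by
        rw [← Ideal.Quotient.eq_zero_iff_mem]
        push_cast [map_sub, map_mul, map_one]
        rw [hs, ← hu, sub_eq_zero, mul_comm]
        exact (u.inv_mul).symm ▸ by
          simpa [mul_comm] using (IsUnit.mul_val_inv ⟨u, rfl⟩)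
      have hJ : (a * x + 1) * s - 1 ∈ Ideal.jacobson (⊥ : Ideal R) := hIJ hts
      have : IsUnit ((a * x + 1) * s) :=
        Ideal.isUnit_of_sub_one_mem_jacobson_bot _ hJ
      exact hx (isUnit_of_mul_isUnit_left this)
end
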